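/- Let T' be a compactly generated triangulated category and T a localizing subcategory such that the inclusion T → T' has a right adjoint. Then for any object X of T', there exists a distinguished triangle X' → X → X'' → ΣX' with X' ∈ T and X'' ∈ T^⊥, and the right adjoint sends X to X'. -/

import Mathlib

open CategoryTheory CategoryTheory.Limits Pretriangulated

universe v u u'

/-- An object `C` of a preadditive category is compact if every map from `C` to a small
coproduct factors through a finite subcoproduct. -/
def IsCompactObj {T : Type u} [Category.{v} T] [Preadditive T] (C : T) : Prop :=
  ∀ (J : Type v) (Xs : J → T) [HasCoproduct Xs] (f : C ⟶ ∐ Xs),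
    ∃ (s : Finset J) (g : ∀ j : J, C ⟶ Xs j), f = ∑ j ∈ s, g j ≫ Sigma.ι Xs j

/-- Let `T'` be a compactly generated triangulated category and `T` a
localizing (triangulated, closed under coproducts) subcategory, embedded via the fully
faithful triangulated coproduct-preserving inclusion `ι : T ⥤ T'`, such that `ι` has a
right adjoint `G`.  Then for any object `X` of `T'` there exists a distinguished triangle
`X' → X → X'' → ΣX'` with `X' ∈ T` (namely `X' = ι(G(X))`, the first map being the counit)
and `X'' ∈ T^⊥`; in particular the right adjoint sends `X` to `X'`. -/
theorem bousfield_localization_triangle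
    (T : Type u) (T' : Type u')
    [Category.{v} T] [Category.{v} T']
    [Preadditive T] [HasZeroObject T] [HasShift T ℤ]
    [∀ n : ℤ, (shiftFunctor T n).Additive] [Pretriangulated T]
    [Preadditive T'] [HasZeroObject T'] [HasShift T' ℤ]
    [∀ n : ℤ, (shiftFunctor T' n).Additive] [Pretriangulated T']
    [HasCoproducts.{v} T']
    -- `T'` is compactly generated
    (S : Set T') (hScpt : ∀ C ∈ S, IsCompactObj C)
    (hSgen : ∀ X : T', (∀ C ∈ S, ∀ n : ℤ, ∀ f : C ⟶ X⟦n⟧, f = 0) → IsZero X)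
    -- the inclusion of the localizing subcategory
    (ι : T ⥤ T') [ι.Full] [ι.Faithful] [ι.CommShift ℤ] [ι.IsTriangulated]
    (hloc : ∀ (J : Type v), PreservesColimitsOfShape (Discrete J) ι)
    (G : T' ⥤ T) (adj : ι ⊣ G) :
    ∀ X : T', ∃ (Z : T') (g : X ⟶ Z) (h : Z ⟶ (ι.obj (G.obj X))⟦(1 : ℤ)⟧),
      Triangle.mk (adj.counit.app X) g h ∈ (distTriang T') ∧
      ∀ (W : T) (φ : ι.obj W ⟶ Z), φ = 0 := by
  intro X
  obtain ⟨Z, g, h, hT⟩ := Pretriangulated.distinguished_cocone_triangle (adj.counit.app X)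
  refine ⟨Z, g, h, hT, fun W φ => ?_⟩
  -- Key: composing with the counit is injective on maps from objects of `T`.
  have key : ∀ (W' : T) (ψ : ι.obj W' ⟶ ι.obj (G.obj X)),
      ψ ≫ adj.counit.app X = 0 → ψ = 0 := by
    intro W' ψ hψ
    have h1 : (adj.homEquiv W' X).symm (ι.preimage ψ) = 0 := by
      rw [adj.homEquiv_counit, ι.map_preimage]; exact hψ
    have h2 : ι.preimage ψ = 0 := by
      apply (adj.homEquiv W' X).symm.injective
      rw [h1, adj.homEquiv_counit, Functor.map_zero, zero_comp]
    rw [← ι.map_preimage ψ, h2, Functor.map_zero]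
  -- Step 1 : φ ≫ h = 0.
  have hφh : φ ≫ h = 0 := by
    have hα : (φ ≫ h) ≫ (shiftFunctor T' (1 : ℤ)).map (adj.counit.app X) = 0 := by
      rw [Category.assoc]
      have := Pretriangulated.comp_distTriang_mor_zero₃₁ _ hT
      dsimp at this
      rw [show h ≫ (shiftFunctor T' (1 : ℤ)).map (adj.counit.app X) = 0 from this, comp_zero]
    apply (shiftFunctor T' (-1 : ℤ)).map_injective
    rw [Functor.map_zero]
    set e := shiftFunctorCompIsoId T' (1 : ℤ) (-1 : ℤ) (by ring) with he
    set β := (shiftFunctor T' (-1 : ℤ)).map (φ ≫ h) ≫ e.hom.app (ι.obj (G.obj X)) with hβ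
    have hβε : β ≫ adj.counit.app X = 0 := by
      have hnat := e.hom.naturality (adj.counit.app X)
      dsimp at hnat
      rw [hβ, Category.assoc, ← hnat, ← Category.assoc, ← Functor.map_comp, hα,
        Functor.map_zero, zero_comp]
    have hγ : (ι.commShiftIso (-1 : ℤ)).hom.app W ≫ β = 0 :=
      key _ _ (by rw [Category.assoc, hβε, comp_zero])
    have hβ0 : β = 0 := by
      rw [← cancel_epi ((ι.commShiftIso (-1 : ℤ)).hom.app W), hγ, comp_zero]
    rw [← cancel_mono (e.hom.app (ι.obj (G.obj X))), ← hβ, hβ0, zero_comp]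
  -- Step 2 : factor through `g` and use exactness plus surjectivity.
  obtain ⟨ψ, hψ⟩ := Pretriangulated.Triangle.coyoneda_exact₃ _ hT φ hφh
  have hsurj : ψ = ι.map ((adj.homEquiv W X) ψ) ≫ adj.counit.app X := by
    conv_lhs => rw [← (adj.homEquiv W X).symm_apply_apply ψ]
    rw [adj.homEquiv_counit]
  have hz := Pretriangulated.comp_distTriang_mor_zero₁₂ _ hT
  dsimp at hψ hz
  rw [show φ = ψ ≫ g from hψ, hsurj]
  exact (Category.assoc _ _ _).trans ((congrArg (fun k => ι.map ((adj.homEquiv W X) ψ) ≫ k) (show adj.counit.app X ≫ g = 0 from hz)).trans comp_zero)
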